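/- In the degenerate case v = 1 where the idempotent S commutes with Σᵢ Xᵢ^{±1} and Σᵢ Yᵢ^{±1} and X_iY_j = q^{-δ_{ij}}Y_jX_i, one has (ad P_{±1})^k Q₁ = (1-q^{±1})^k S (Σ_{i=1}^N X_i^{±k} Y_i) S, where P_{±1} = S(Σᵢ Xᵢ^{±1})S and Q₁ = S(Σᵢ Yᵢ)S. -/

import Mathlib

section
variable {F : Type*} [Field F] {A : Type*} [Ring A] [Algebra F A]

lemma sandwich_comm (S B T T' : A) (hS : S * S = S) (hSB : S * B = B * S)
    (c : F) (h : B * T - T * B = c • T') :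
    S * B * S * (S * T * S) - (S * T * S) * (S * B * S) = c • (S * T' * S) := by
  have hP : S * B * S = B * S := by rw [hSB, mul_assoc, hS]
  have hP' : S * B * S = S * B := by rw [hSB, mul_assoc, hS, ← hSB]
  have h1 : S * B * S * (S * T * S) = S * (B * T) * S := by
    rw [hP]
    calc B * S * (S * T * S) = B * (S * S) * T * S := by
          simp only [mul_assoc]
      _ = B * S * T * S := by rw [hS]
      _ = S * (B * T) * S := by rw [← mul_assoc, ← hSB, mul_assoc S B T]
  have h2 : S * T * S * (S * B * S) = S * (T * B) * S := by
    rw [hP']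
    calc S * T * S * (S * B) = S * T * (S * S) * B := by
          simp only [mul_assoc]
      _ = S * T * (S * B) := by rw [hS, mul_assoc]
      _ = S * T * (B * S) := by rw [hSB]
      _ = S * (T * B) * S := by simp only [mul_assoc]
  rw [h1, h2, ← sub_mul, ← mul_sub, h, mul_smul_comm, smul_mul_assoc]

lemma comm_sum (c : F) (hc : c ≠ 0) {N : ℕ} (Z Y : Fin N → A)
    (hZZ : ∀ i j, Commute (Z i) (Z j))
    (hZY : ∀ i j, Z i * Y j = (if i = j then c else 1) • (Y j * Z i)) (k : ℕ) :
    (∑ j, Z j) * (∑ i, Z i ^ k * Y i) - (∑ i, Z i ^ k * Y i) * (∑ j, Z j)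
      = (1 - c⁻¹) • ∑ i, Z i ^ (k + 1) * Y i := by
  have hterm : ∀ i j : Fin N, Z j * (Z i ^ k * Y i) - (Z i ^ k * Y i) * Z j
      = if i = j then (1 - c⁻¹) • (Z i ^ (k + 1) * Y i) else (0 : A) := by
    intro i j
    have hcomm : Z j * Z i ^ k = Z i ^ k * Z j := ((hZZ j i).pow_right k).eq
    rw [← mul_assoc, hcomm, mul_assoc, mul_assoc, hZY j i]
    by_cases h : i = j
    · subst h
      simp only [eq_self_iff_true, if_true]
      have hyz : Y i * Z i = c⁻¹ • (Z i * Y i) := by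
        rw [hZY i i, if_pos rfl, smul_smul, inv_mul_cancel₀ hc, one_smul]
      rw [hyz, smul_smul, mul_inv_cancel₀ hc, one_smul, mul_smul_comm,
        ← mul_assoc, ← pow_succ, sub_smul, one_smul]
    · rw [if_neg (fun hh => h hh.symm), if_neg h, one_smul, sub_self]
  calc (∑ j, Z j) * (∑ i, Z i ^ k * Y i) - (∑ i, Z i ^ k * Y i) * (∑ j, Z j)
      = (∑ i, ∑ j, Z j * (Z i ^ k * Y i)) - ∑ i, ∑ j, (Z i ^ k * Y i) * Z j := by
        rw [Finset.sum_mul_sum, Finset.sum_mul_sum, Finset.sum_comm]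
    _ = ∑ i, ∑ j, (Z j * (Z i ^ k * Y i) - (Z i ^ k * Y i) * Z j) := by
        rw [← Finset.sum_sub_distrib]
        exact Finset.sum_congr rfl fun i _ => (Finset.sum_sub_distrib _ _).symm
    _ = ∑ i, (1 - c⁻¹) • (Z i ^ (k + 1) * Y i) := by
        refine Finset.sum_congr rfl fun i _ => ?_
        simp only [hterm, Finset.sum_ite_eq, Finset.mem_univ, if_pos]
    _ = (1 - c⁻¹) • ∑ i, Z i ^ (k + 1) * Y i := (Finset.smul_sum).symm

lemma main_iter (c : F) (hc : c ≠ 0) {N : ℕ} (Z Y : Fin N → A)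
    (hZZ : ∀ i j, Commute (Z i) (Z j))
    (hZY : ∀ i j, Z i * Y j = (if i = j then c else 1) • (Y j * Z i))
    (S : A) (hS : S * S = S) (hSZ : S * (∑ i, Z i) = (∑ i, Z i) * S) (k : ℕ) :
    (fun b => S * (∑ i, Z i) * S * b - b * (S * (∑ i, Z i) * S))^[k]
        (S * (∑ i, Y i) * S)
      = (1 - c⁻¹) ^ k • (S * (∑ i, Z i ^ k * Y i) * S) := by
  induction k with
  | zero => simp
  | succ k ih =>
    rw [Function.iterate_succ_apply', ih]
    simp only [mul_smul_comm, smul_mul_assoc, ← smul_sub]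
    rw [sandwich_comm S _ _ _ hS hSZ (1 - c⁻¹) (comm_sum c hc Z Y hZZ hZY k),
      smul_smul, ← pow_succ]

end

theorem stmt11 {F : Type*} [Field F] {A : Type*} [Ring A] [Algebra F A]
    (q : F) (hq : q ≠ 0) (N : ℕ) (X Xi Y Yi : Fin N → A)
    (hXinv : ∀ i, X i * Xi i = 1 ∧ Xi i * X i = 1)
    (hYinv : ∀ i, Y i * Yi i = 1 ∧ Yi i * Y i = 1)
    (hXX : ∀ i j, Commute (X i) (X j))
    (hYY : ∀ i j, Commute (Y i) (Y j))
    (hXY : ∀ i j, X i * Y j = (if i = j then q⁻¹ else 1) • (Y j * X i))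
    (S : A) (hS : S * S = S)
    (hSX : Commute S (∑ i, X i)) (hSXi : Commute S (∑ i, Xi i))
    (hSY : Commute S (∑ i, Y i)) (hSYi : Commute S (∑ i, Yi i))
    (k : ℕ) :
    ((fun b => S * (∑ i, X i) * S * b - b * (S * (∑ i, X i) * S))^[k]
        (S * (∑ i, Y i) * S)
      = (1 - q) ^ k • (S * (∑ i, X i ^ k * Y i) * S))
    ∧ ((fun b => S * (∑ i, Xi i) * S * b - b * (S * (∑ i, Xi i) * S))^[k]
        (S * (∑ i, Y i) * S)
      = (1 - q⁻¹) ^ k • (S * (∑ i, Xi i ^ k * Y i) * S)) := by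
  -- units for the X family
  let u : Fin N → Aˣ := fun i => ⟨X i, Xi i, (hXinv i).1, (hXinv i).2⟩
  have hXiXi : ∀ i j, Commute (Xi i) (Xi j) := by
    intro i j
    have h1 : Commute (X i) (X j) := hXX i j
    exact ((h1.units_inv_right (u := u j)).units_inv_left (u := u i))
  have hXiY : ∀ i j, Xi i * Y j = (if i = j then q else 1) • (Y j * Xi i) := by
    intro i j
    set e : F := if i = j then q⁻¹ else 1 with he_def
    have he : e ≠ 0 := by
      rw [he_def]; split_ifs
      · exact inv_ne_zero hq
      · exact one_ne_zero
    have hyx : Y j * X i = e⁻¹ • (X i * Y j) := by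
      rw [hXY i j, smul_smul, inv_mul_cancel₀ he, one_smul]
    have key : Xi i * Y j = e⁻¹ • (Y j * Xi i) := by
      calc Xi i * Y j = Xi i * Y j * (X i * Xi i) := by rw [(hXinv i).1, mul_one]
        _ = Xi i * (Y j * X i) * Xi i := by simp only [mul_assoc]
        _ = Xi i * (e⁻¹ • (X i * Y j)) * Xi i := by rw [hyx]
        _ = e⁻¹ • (Xi i * X i * (Y j * Xi i)) := by
            simp only [mul_smul_comm, smul_mul_assoc, mul_assoc]
        _ = e⁻¹ • (Y j * Xi i) := by rw [(hXinv i).2, one_mul]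
    rw [key, he_def]
    split_ifs with h
    · rw [inv_inv]
    · rw [inv_one]
  constructor
  · have := main_iter (q⁻¹) (inv_ne_zero hq) X Y hXX hXY S hS hSX.eq k
    rwa [inv_inv] at this
  · exact main_iter q hq Xi Y hXiXi hXiY S hS hSXi.eq k
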